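/- Let (x,y,z) ∈ 𝓗 with x, z ≥ 0, 0 ≤ y ≤ x, and x < √z. Define the word S_z over X by: S_z = a^{n+1} b^{n+1} if z = (n+1)² for some n ∈ ℕ; S_z = a^k b a^{n−k} b^n if z = n² + k for some n ∈ ℕ and 1 ≤ k ≤ n; and S_z = a^k b a^{n+1−k} b^n if z = n² + n + k for some n ∈ ℕ and 1 ≤ k ≤ n. Let (x', y', z) be the element of 𝓗 represented by S_z. Then b^{y−y'} S_z a^{x−x'} is a geodesic representative of (x,y,z). -/

import Mathlib

open scoped commutatorElement

/-- The two generators `a, b` of the discrete Heisenberg group. -/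
inductive HGen : Type
  | a | b
deriving DecidableEq

/-- Relators of the discrete Heisenberg group `⟨a,b ∣ [a,[a,b]] = [b,[a,b]] = 1⟩`. -/
def Hrels : Set (FreeGroup HGen) :=
  { ⁅FreeGroup.of HGen.a, ⁅FreeGroup.of HGen.a, FreeGroup.of HGen.b⁆⁆,
    ⁅FreeGroup.of HGen.b, ⁅FreeGroup.of HGen.a, FreeGroup.of HGen.b⁆⁆ }

/-- The discrete Heisenberg group `𝓗`. -/
abbrev Heis : Type := PresentedGroup Hrels

/-- The generator `a` of `𝓗`. -/
def Ha : Heis := PresentedGroup.of HGen.a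

/-- The generator `b` of `𝓗`. -/
def Hb : Heis := PresentedGroup.of HGen.b

/-- The four letters of the alphabet `X = {a, a⁻¹, b, b⁻¹}`. -/
inductive XLetter : Type
  | a | A | b | B
deriving DecidableEq

/-- The element of `𝓗` represented by a letter of `X`. -/
def XLetter.toH : XLetter → Heis
  | .a => Ha
  | .A => Ha⁻¹
  | .b => Hb
  | .B => Hb⁻¹

/-- The element of `𝓗` represented by a word over `X`. -/
def evalX (w : List XLetter) : Heis := (w.map XLetter.toH).prod

/-- The word `a^k` over `X`, for `k ∈ ℤ`. -/
def apow (k : ℤ) : List XLetter :=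
  if 0 ≤ k then List.replicate k.toNat XLetter.a else List.replicate (-k).toNat XLetter.A

/-- The word `b^k` over `X`, for `k ∈ ℤ`. -/
def bpow (k : ℤ) : List XLetter :=
  if 0 ≤ k then List.replicate k.toNat XLetter.b else List.replicate (-k).toNat XLetter.B

/-- The element `(x,y,z)` of `𝓗`, i.e. the element with normal form `[a,b]^z b^y a^x`. -/
def hElt (x y z : ℤ) : Heis := ⁅Ha, Hb⁆ ^ z * Hb ^ y * Ha ^ x

/-- The word length `ℓ_X(g)` of `g ∈ 𝓗` with respect to `X`. -/
noncomputable def lenX (g : Heis) : ℕ :=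
  sInf { n | ∃ w : List XLetter, evalX w = g ∧ w.length = n }

/-- A word over `X` is geodesic if its length equals the word length of the
element it represents. -/
def IsGeodesicX (w : List XLetter) : Prop := w.length = lenX (evalX w)


set_option maxHeartbeats 1600000


lemma stepa1 (p q x y z : ℤ) (hxp : |x| ≤ p) (hyq : |y| ≤ q)
    (ih : 4*z ≤ (p+|x|)*(q+|y|) + 4*min 0 (x*y)) :
    4*z ≤ ((p+1)+|x+1|)*(q+|y|) + 4*min 0 ((x+1)*y) := by
  rcases abs_cases x with ⟨h1,h2⟩ | ⟨h1,h2⟩ <;>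
  rcases abs_cases y with ⟨h3,h4⟩ | ⟨h3,h4⟩ <;>
  rcases abs_cases (x+1) with ⟨h5,h6⟩ | ⟨h5,h6⟩ <;>
  rcases min_cases 0 (x*y) with ⟨h9,h10⟩ | ⟨h9,h10⟩ <;>
  rcases min_cases 0 ((x+1)*y) with ⟨h11,h12⟩ | ⟨h11,h12⟩ <;>
  rw [h1, h3, h9] at ih <;> rw [h3, h5, h11] <;>
  rw [h1] at hxp <;> rw [h3] at hyq <;>
  first | omega | nlinarith [ih, hxp, hyq, h10, h12]

lemma stepa2 (p q x y z : ℤ) (hxp : |x| ≤ p) (hyq : |y| ≤ q)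
    (ih : 4*z ≤ (p+|x|)*(q+|y|) + 4*min 0 (x*y)) :
    4*z ≤ ((p+1)+|x-1|)*(q+|y|) + 4*min 0 ((x-1)*y) := by
  rcases abs_cases x with ⟨h1,h2⟩ | ⟨h1,h2⟩ <;>
  rcases abs_cases y with ⟨h3,h4⟩ | ⟨h3,h4⟩ <;>
  rcases abs_cases (x-1) with ⟨h5,h6⟩ | ⟨h5,h6⟩ <;>
  rcases min_cases 0 (x*y) with ⟨h9,h10⟩ | ⟨h9,h10⟩ <;>
  rcases min_cases 0 ((x-1)*y) with ⟨h11,h12⟩ | ⟨h11,h12⟩ <;>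
  rw [h1, h3, h9] at ih <;> rw [h3, h5, h11] <;>
  rw [h1] at hxp <;> rw [h3] at hyq <;>
  first | omega | nlinarith [ih, hxp, hyq, h10, h12]

lemma stepb1 (p q x y z : ℤ) (hxp : |x| ≤ p) (hyq : |y| ≤ q)
    (ih : 4*z ≤ (p+|x|)*(q+|y|) + 4*min 0 (x*y)) :
    4*(z + x) ≤ (p+|x|)*((q+1)+|y+1|) + 4*min 0 (x*(y+1)) := by
  rcases abs_cases x with ⟨h1,h2⟩ | ⟨h1,h2⟩ <;>
  rcases abs_cases y with ⟨h3,h4⟩ | ⟨h3,h4⟩ <;>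
  rcases abs_cases (y+1) with ⟨h5,h6⟩ | ⟨h5,h6⟩ <;>
  rcases min_cases 0 (x*y) with ⟨h9,h10⟩ | ⟨h9,h10⟩ <;>
  rcases min_cases 0 (x*(y+1)) with ⟨h11,h12⟩ | ⟨h11,h12⟩ <;>
  rw [h1, h3, h9] at ih <;> rw [h1, h5, h11] <;>
  rw [h1] at hxp <;> rw [h3] at hyq <;>
  first | omega | nlinarith [ih, hxp, hyq, h10, h12]

lemma stepb2 (p q x y z : ℤ) (hxp : |x| ≤ p) (hyq : |y| ≤ q)
    (ih : 4*z ≤ (p+|x|)*(q+|y|) + 4*min 0 (x*y)) :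
    4*(z - x) ≤ (p+|x|)*((q+1)+|y-1|) + 4*min 0 (x*(y-1)) := by
  rcases abs_cases x with ⟨h1,h2⟩ | ⟨h1,h2⟩ <;>
  rcases abs_cases y with ⟨h3,h4⟩ | ⟨h3,h4⟩ <;>
  rcases abs_cases (y-1) with ⟨h5,h6⟩ | ⟨h5,h6⟩ <;>
  rcases min_cases 0 (x*y) with ⟨h9,h10⟩ | ⟨h9,h10⟩ <;>
  rcases min_cases 0 (x*(y-1)) with ⟨h11,h12⟩ | ⟨h11,h12⟩ <;>
  rw [h1, h3, h9] at ih <;> rw [h1, h5, h11] <;>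
  rw [h1] at hxp <;> rw [h3] at hyq <;>
  first | omega | nlinarith [ih, hxp, hyq, h10, h12]

@[ext] structure H3 where
  x : ℤ
  y : ℤ
  z : ℤ

namespace H3

instance : Mul H3 := ⟨fun g h => ⟨g.x + h.x, g.y + h.y, g.z + h.z + g.x * h.y⟩⟩
instance : One H3 := ⟨⟨0,0,0⟩⟩
instance : Inv H3 := ⟨fun g => ⟨-g.x, -g.y, g.x * g.y - g.z⟩⟩

@[simp] lemma mul_def (g h : H3) : g * h = ⟨g.x + h.x, g.y + h.y, g.z + h.z + g.x * h.y⟩ := rfl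
@[simp] lemma one_def : (1 : H3) = ⟨0,0,0⟩ := rfl
@[simp] lemma inv_def (g : H3) : g⁻¹ = ⟨-g.x, -g.y, g.x * g.y - g.z⟩ := rfl

instance : Group H3 where
  mul_assoc a b c := by ext <;> simp <;> ring
  one_mul a := by ext <;> simp
  mul_one a := by ext <;> simp
  inv_mul_cancel a := by ext <;> simp <;> ring

end H3

def hgenToH3 : HGen → H3
  | .a => ⟨1,0,0⟩
  | .b => ⟨0,1,0⟩

lemma hrels_cond : ∀ r ∈ Hrels, FreeGroup.lift hgenToH3 r = 1 := by
  intro r hr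
  rcases hr with h | h <;> subst h <;>
    simp [commutatorElement_def, hgenToH3] <;> ext <;> simp <;> ring

def φ : Heis →* H3 := PresentedGroup.toGroup hrels_cond

@[simp] lemma φ_Ha : φ Ha = ⟨1,0,0⟩ := PresentedGroup.toGroup.of hrels_cond
@[simp] lemma φ_Hb : φ Hb = ⟨0,1,0⟩ := PresentedGroup.toGroup.of hrels_cond

lemma φ_Ha_zpow (n : ℤ) : φ (Ha ^ n) = ⟨n, 0, 0⟩ := by
  rw [map_zpow, φ_Ha]
  induction n using Int.induction_on with
  | zero => simp
  | succ k ih => rw [zpow_add_one, ih]; ext <;> simp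
  | pred k ih => rw [zpow_sub_one, ih]; ext <;> simp <;> ring

lemma φ_Hb_zpow (n : ℤ) : φ (Hb ^ n) = ⟨0, n, 0⟩ := by
  rw [map_zpow, φ_Hb]
  induction n using Int.induction_on with
  | zero => simp
  | succ k ih => rw [zpow_add_one, ih]; ext <;> simp
  | pred k ih => rw [zpow_sub_one, ih]; ext <;> simp <;> ring

lemma φ_c_zpow (n : ℤ) : φ (⁅Ha, Hb⁆ ^ n) = ⟨0, 0, n⟩ := by
  rw [map_zpow, map_commutatorElement, φ_Ha, φ_Hb]
  have hc : ⁅(⟨1,0,0⟩ : H3), (⟨0,1,0⟩ : H3)⁆ = ⟨0,0,1⟩ := by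
    simp [commutatorElement_def]
  rw [hc]
  induction n using Int.induction_on with
  | zero => simp
  | succ k ih => rw [zpow_add_one, ih]; ext <;> simp
  | pred k ih => rw [zpow_sub_one, ih]; ext <;> simp <;> ring

lemma φ_hElt (x y z : ℤ) : φ (hElt x y z) = ⟨x, y, z⟩ := by
  rw [hElt, map_mul, map_mul, φ_Ha_zpow, φ_Hb_zpow, φ_c_zpow]
  ext <;> simp

-- ===== word evaluation lemmas =====

@[simp] lemma evalX_nil : evalX [] = 1 := rfl

lemma evalX_append (u v : List XLetter) : evalX (u ++ v) = evalX u * evalX v := by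
  simp [evalX]

lemma evalX_apow (k : ℤ) : evalX (apow k) = Ha ^ k := by
  rcases le_or_gt 0 k with h | h
  · rw [apow, if_pos h]
    simp [evalX, List.map_replicate, List.prod_replicate, XLetter.toH]
    rw [← zpow_natCast, Int.toNat_of_nonneg h]
  · rw [apow, if_neg (not_le.mpr h)]
    simp [evalX, List.map_replicate, List.prod_replicate, XLetter.toH]
    rw [← zpow_natCast, Int.toNat_of_nonneg (by omega), ← zpow_neg, neg_neg]

lemma evalX_bpow (k : ℤ) : evalX (bpow k) = Hb ^ k := by
  rcases le_or_gt 0 k with h | h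
  · rw [bpow, if_pos h]
    simp [evalX, List.map_replicate, List.prod_replicate, XLetter.toH]
    rw [← zpow_natCast, Int.toNat_of_nonneg h]
  · rw [bpow, if_neg (not_le.mpr h)]
    simp [evalX, List.map_replicate, List.prod_replicate, XLetter.toH]
    rw [← zpow_natCast, Int.toNat_of_nonneg (by omega), ← zpow_neg, neg_neg]

@[simp] lemma apow_length (k : ℤ) : (apow k).length = k.natAbs := by
  rcases le_or_gt 0 k with h | h <;> simp [apow, h, not_le.mpr] <;> omega

@[simp] lemma bpow_length (k : ℤ) : (bpow k).length = k.natAbs := by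
  rcases le_or_gt 0 k with h | h <;> simp [bpow, h, not_le.mpr] <;> omega

-- counts
def cntA (w : List XLetter) : ℤ := w.count XLetter.a + w.count XLetter.A
def cntB (w : List XLetter) : ℤ := w.count XLetter.b + w.count XLetter.B

lemma cnt_len (w : List XLetter) : cntA w + cntB w = w.length := by
  induction w with
  | nil => simp [cntA, cntB]
  | cons l t ih =>
    cases l <;> simp [cntA, cntB, List.count_cons] at * <;> push_cast at * <;> omega

/-- Main inequality carried by induction over the word. -/
lemma main_ineq (w : List XLetter) :
    |(φ (evalX w)).x| ≤ cntA w ∧ |(φ (evalX w)).y| ≤ cntB w ∧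
    (cntA w + (φ (evalX w)).x) % 2 = 0 ∧ (cntB w + (φ (evalX w)).y) % 2 = 0 ∧
    4 * (φ (evalX w)).z ≤ (cntA w + |(φ (evalX w)).x|) * (cntB w + |(φ (evalX w)).y|)
      + 4 * min 0 ((φ (evalX w)).x * (φ (evalX w)).y) := by
  induction w using List.reverseRecOn with
  | nil => simp [cntA, cntB]
  | append_singleton ws l ih =>
    obtain ⟨h1, h2, h3, h4, h5⟩ := ih
    have he : evalX (ws ++ [l]) = evalX ws * l.toH := by
      rw [evalX_append]; congr 1; simp [evalX]
    set g := φ (evalX ws) with hg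
    have hB : cntB (ws ++ [l]) = cntB ws + (if l = .b ∨ l = .B then 1 else 0) := by
      cases l <;> simp [cntB, List.count_append] <;> push_cast <;> ring
    rw [he, map_mul]
    cases l with
    | a =>
      have e : g * φ XLetter.a.toH = ⟨g.x + 1, g.y, g.z⟩ := by
        show g * φ Ha = _
        rw [φ_Ha]; ext <;> simp
      have hA' : cntA (ws ++ [XLetter.a]) = cntA ws + 1 := by
        simp [cntA, List.count_append] <;> push_cast <;> ring
      have hB' : cntB (ws ++ [XLetter.a]) = cntB ws := by
        simp [cntB, List.count_append] <;> push_cast <;> ring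
      rw [e, hA', hB']
      refine ⟨?_, h2, ?_, h4, ?_⟩
      · have := abs_add_le g.x 1
        rw [abs_one] at this
        exact le_trans this (by linarith)
      · show (cntA ws + 1 + (g.x + 1)) % 2 = 0
        omega
      · exact stepa1 _ _ _ _ _ h1 h2 h5
    | A =>
      have e : g * φ XLetter.A.toH = ⟨g.x - 1, g.y, g.z⟩ := by
        show g * φ Ha⁻¹ = _
        rw [map_inv, φ_Ha]; ext <;> simp <;> ring
      have hA' : cntA (ws ++ [XLetter.A]) = cntA ws + 1 := by
        simp [cntA, List.count_append] <;> push_cast <;> ring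
      have hB' : cntB (ws ++ [XLetter.A]) = cntB ws := by
        simp [cntB, List.count_append] <;> push_cast <;> ring
      rw [e, hA', hB']
      refine ⟨?_, h2, ?_, h4, ?_⟩
      · have h := abs_sub g.x (1:ℤ)
        rw [abs_one] at h
        show |g.x - 1| ≤ cntA ws + 1
        linarith
      · show (cntA ws + 1 + (g.x - 1)) % 2 = 0
        omega
      · exact stepa2 _ _ _ _ _ h1 h2 h5
    | b =>
      have e : g * φ XLetter.b.toH = ⟨g.x, g.y + 1, g.z + g.x⟩ := by
        show g * φ Hb = _
        rw [φ_Hb]; ext <;> simp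
      have hA' : cntA (ws ++ [XLetter.b]) = cntA ws := by
        simp [cntA, List.count_append] <;> push_cast <;> ring
      have hB' : cntB (ws ++ [XLetter.b]) = cntB ws + 1 := by
        simp [cntB, List.count_append] <;> push_cast <;> ring
      rw [e, hA', hB']
      refine ⟨h1, ?_, h3, ?_, ?_⟩
      · have := abs_add_le g.y 1
        rw [abs_one] at this
        exact le_trans this (by linarith)
      · show (cntB ws + 1 + (g.y + 1)) % 2 = 0
        omega
      · exact stepb1 _ _ _ _ _ h1 h2 h5
    | B =>
      have e : g * φ XLetter.B.toH = ⟨g.x, g.y - 1, g.z - g.x⟩ := by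
        show g * φ Hb⁻¹ = _
        rw [map_inv, φ_Hb]; ext <;> simp <;> ring
      have hA' : cntA (ws ++ [XLetter.B]) = cntA ws := by
        simp [cntA, List.count_append] <;> push_cast <;> ring
      have hB' : cntB (ws ++ [XLetter.B]) = cntB ws + 1 := by
        simp [cntB, List.count_append] <;> push_cast <;> ring
      rw [e, hA', hB']
      refine ⟨h1, ?_, h3, ?_, ?_⟩
      · have h := abs_sub g.y (1:ℤ)
        rw [abs_one] at h
        show |g.y - 1| ≤ cntB ws + 1
        linarith
      · show (cntB ws + 1 + (g.y - 1)) % 2 = 0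
        omega
      · exact stepb2 _ _ _ _ _ h1 h2 h5

-- ===== relations in Heis =====

lemma mk_rel_one (r : FreeGroup HGen) (hr : r ∈ Hrels) : PresentedGroup.mk Hrels r = 1 := by
  have h : r ∈ Subgroup.normalClosure Hrels := Subgroup.subset_normalClosure hr
  exact (QuotientGroup.eq_one_iff r).mpr h

lemma comm_ac : Commute Ha ⁅Ha, Hb⁆ := by
  rw [← commutatorElement_eq_one_iff_commute]
  have : ⁅Ha, ⁅Ha, Hb⁆⁆ =
      PresentedGroup.mk Hrels ⁅FreeGroup.of HGen.a, ⁅FreeGroup.of HGen.a, FreeGroup.of HGen.b⁆⁆ := by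
    simp [Ha, Hb, PresentedGroup.of, map_commutatorElement]
  rw [this]
  exact mk_rel_one _ (Set.mem_insert _ _)

lemma comm_bc : Commute Hb ⁅Ha, Hb⁆ := by
  rw [← commutatorElement_eq_one_iff_commute]
  have : ⁅Hb, ⁅Ha, Hb⁆⁆ =
      PresentedGroup.mk Hrels ⁅FreeGroup.of HGen.b, ⁅FreeGroup.of HGen.a, FreeGroup.of HGen.b⁆⁆ := by
    simp [Ha, Hb, PresentedGroup.of, map_commutatorElement]
  rw [this]
  exact mk_rel_one _ (Set.mem_insert_of_mem _ rfl)

lemma sandwich (s t x' y' z : ℤ) :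
    Hb ^ s * hElt x' y' z * Ha ^ t = hElt (x' + t) (s + y') z := by
  have h1 : Hb ^ s * ⁅Ha, Hb⁆ ^ z = ⁅Ha, Hb⁆ ^ z * Hb ^ s :=
    ((comm_bc).zpow_zpow s z).eq
  rw [hElt, hElt]
  calc Hb ^ s * (⁅Ha, Hb⁆ ^ z * Hb ^ y' * Ha ^ x') * Ha ^ t
      = (Hb ^ s * ⁅Ha, Hb⁆ ^ z) * (Hb ^ y' * (Ha ^ x' * Ha ^ t)) := by
        simp only [mul_assoc]
    _ = (⁅Ha, Hb⁆ ^ z * Hb ^ s) * (Hb ^ y' * Ha ^ (x' + t)) := by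
        rw [h1, ← zpow_add]
    _ = ⁅Ha, Hb⁆ ^ z * Hb ^ (s + y') * Ha ^ (x' + t) := by
        simp only [mul_assoc, zpow_add]

-- ===== arithmetic helpers =====

lemma ab1 (a b n : ℤ) (ha : 0 ≤ a) (hb : 0 ≤ b) (h : a + b ≤ 2*n) : a*b ≤ n^2 := by
  nlinarith [sq_nonneg (a-b)]

lemma ab2 (a b n : ℤ) (ha : 0 ≤ a) (hb : 0 ≤ b) (h : a + b ≤ 2*n+1) : a*b ≤ n^2+n := by
  have h4 : 4*(a*b - (n^2+n)) ≤ 1 := by nlinarith [sq_nonneg (a-b)]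
  have h5 : a*b - (n^2+n) ≤ 0 := by
    by_contra hc
    push_neg at hc
    linarith
  linarith

lemma cntA_nonneg (w : List XLetter) : 0 ≤ cntA w := by
  have := Int.natCast_nonneg (w.count XLetter.a)
  have := Int.natCast_nonneg (w.count XLetter.A)
  unfold cntA; omega

lemma cntB_nonneg (w : List XLetter) : 0 ≤ cntB w := by
  have := Int.natCast_nonneg (w.count XLetter.b)
  have := Int.natCast_nonneg (w.count XLetter.B)
  unfold cntB; omega

/-- Every word representing `(x,y,z)` (with `x,y ≥ 0`) gives `a,b ≥ 0` with
`z ≤ ab` and `2a+2b = L+x+y`. -/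
lemma repr_bound (x y z : ℤ) (hx : 0 ≤ x) (hy : 0 ≤ y) (w : List XLetter)
    (hw : evalX w = hElt x y z) :
    ∃ a b : ℤ, 0 ≤ a ∧ 0 ≤ b ∧ z ≤ a * b ∧ 2*a + 2*b = (w.length : ℤ) + x + y := by
  have hc := main_ineq w
  rw [hw, φ_hElt] at hc
  dsimp only at hc
  obtain ⟨h1, h2, h3, h4, h5⟩ := hc
  have hpq := cnt_len w
  have hp0 := cntA_nonneg w
  have hq0 := cntB_nonneg w
  rw [abs_of_nonneg hx] at h1 h5
  rw [abs_of_nonneg hy] at h2 h5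
  have hmin : min 0 (x*y) = 0 := min_eq_left (mul_nonneg hx hy)
  rw [hmin] at h5
  obtain ⟨a, ha⟩ : ∃ a, cntA w + x = 2*a := ⟨(cntA w + x)/2, by omega⟩
  obtain ⟨b, hb⟩ : ∃ b, cntB w + y = 2*b := ⟨(cntB w + y)/2, by omega⟩
  refine ⟨a, b, by omega, by omega, ?_, by omega⟩
  have hprod : (cntA w + x) * (cntB w + y) = 4*(a*b) := by rw [ha, hb]; ring
  linarith

/-- Suppose `x, z ≥ 0`, `0 ≤ y ≤ x` and `x < √z`. Let `S_z` be the word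
`a^{n+1} b^{n+1}` if `z = (n+1)²`; `a^k b a^{n−k} b^n` if `z = n² + k` with `1 ≤ k ≤ n`;
and `a^k b a^{n+1−k} b^n` if `z = n² + n + k` with `1 ≤ k ≤ n`. If `S_z` represents
`(x',y',z) ∈ 𝓗`, then `b^{y−y'} S_z a^{x−x'}` is a geodesic representative of `(x,y,z)`. -/
theorem geodesic_case_I1 (x y z : ℤ) (hx : 0 ≤ x) (hz : 0 ≤ z) (hy0 : 0 ≤ y) (hyx : y ≤ x)
    (hsqrt : (x : ℝ) < Real.sqrt z)
    (Sz : List XLetter)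
    (hSz : (∃ n : ℕ, z = ((n : ℤ) + 1) ^ 2 ∧ Sz = apow ((n : ℤ) + 1) ++ bpow ((n : ℤ) + 1)) ∨
           (∃ n k : ℕ, 1 ≤ k ∧ k ≤ n ∧ z = (n : ℤ) ^ 2 + (k : ℤ) ∧
              Sz = apow (k : ℤ) ++ bpow 1 ++ apow ((n : ℤ) - (k : ℤ)) ++ bpow (n : ℤ)) ∨
           (∃ n k : ℕ, 1 ≤ k ∧ k ≤ n ∧ z = (n : ℤ) ^ 2 + (n : ℤ) + (k : ℤ) ∧
              Sz = apow (k : ℤ) ++ bpow 1 ++ apow ((n : ℤ) + 1 - (k : ℤ)) ++ bpow (n : ℤ)))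
    (x' y' : ℤ) (hrep : evalX Sz = hElt x' y' z) :
    evalX (bpow (y - y') ++ Sz ++ apow (x - x')) = hElt x y z ∧
    IsGeodesicX (bpow (y - y') ++ Sz ++ apow (x - x')) := by
  have hx2 : x^2 < z := by
    have hzR : (0:ℝ) ≤ (z:ℝ) := by exact_mod_cast hz
    have h0 : (0:ℝ) ≤ (x:ℝ) := by exact_mod_cast hx
    have h2 : (x:ℝ)^2 < (Real.sqrt z)^2 := by
      nlinarith [Real.sqrt_nonneg (z:ℝ)]
    rw [Real.sq_sqrt hzR] at h2
    exact_mod_cast h2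
  have hW : evalX (bpow (y - y') ++ Sz ++ apow (x - x')) = hElt x y z := by
    rw [evalX_append, evalX_append, evalX_bpow, evalX_apow, hrep, sandwich,
      show x' + (x - x') = x by ring, show y - y' + y' = y by ring]
  refine ⟨hW, ?_⟩
  rw [IsGeodesicX, hW, lenX]
  have hmem : (bpow (y - y') ++ Sz ++ apow (x - x')).length ∈
      {m | ∃ w : List XLetter, evalX w = hElt x y z ∧ w.length = m} := ⟨_, hW, rfl⟩
  refine le_antisymm (le_csInf ⟨_, hmem⟩ ?_) (Nat.sInf_le hmem)
  rintro m ⟨w, hw, rfl⟩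
  obtain ⟨a, b, ha0, hb0, hzab, hab⟩ := repr_bound x y z hx hy0 w hw
  rcases hSz with ⟨n, hzn, hS⟩ | ⟨n, k, hk1, hkn, hzn, hS⟩ | ⟨n, k, hk1, hkn, hzn, hS⟩
  · -- z = (n+1)^2
    have hn0 : (0:ℤ) ≤ (n:ℤ) := Int.natCast_nonneg n
    have hφS : φ (evalX Sz) = ⟨(n:ℤ)+1, (n:ℤ)+1, z⟩ := by
      rw [hS, evalX_append, evalX_apow, evalX_bpow, map_mul, φ_Ha_zpow, φ_Hb_zpow]
      ext <;> simp [hzn] <;> ring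
    rw [hrep, φ_hElt] at hφS
    have hx' : x' = (n:ℤ)+1 := (congrArg H3.x hφS)
    have hy' : y' = (n:ℤ)+1 := (congrArg H3.y hφS)
    have hxn : x ≤ n := by nlinarith
    have hlen : ((bpow (y - y') ++ Sz ++ apow (x - x')).length : ℤ) = (4*n+4) - x - y := by
      rw [hS]
      simp only [List.length_append, apow_length, bpow_length]
      omega
    have hkey : 4*n + 4 ≤ 2*a + 2*b := by
      by_contra hcon
      push_neg at hcon
      have h1 : a + b ≤ 2*n+1 := by omega
      have h2 := ab2 a b n ha0 hb0 h1
      nlinarith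
    omega
  · -- z = n^2 + k
    have hn0 : (0:ℤ) ≤ (n:ℤ) := Int.natCast_nonneg n
    have hkn' : (k:ℤ) ≤ (n:ℤ) := by exact_mod_cast hkn
    have hk1' : (1:ℤ) ≤ (k:ℤ) := by exact_mod_cast hk1
    have hφS : φ (evalX Sz) = ⟨(n:ℤ), (n:ℤ)+1, z⟩ := by
      rw [hS, evalX_append, evalX_append, evalX_append, evalX_apow, evalX_bpow, evalX_apow,
        evalX_bpow, map_mul, map_mul, map_mul, φ_Ha_zpow, φ_Hb_zpow, φ_Ha_zpow, φ_Hb_zpow]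
      ext <;> simp [hzn] <;> ring
    rw [hrep, φ_hElt] at hφS
    have hx' : x' = (n:ℤ) := (congrArg H3.x hφS)
    have hy' : y' = (n:ℤ)+1 := (congrArg H3.y hφS)
    have hxn : x ≤ n := by nlinarith
    have hlen : ((bpow (y - y') ++ Sz ++ apow (x - x')).length : ℤ) = (4*n+2) - x - y := by
      rw [hS]
      simp only [List.length_append, apow_length, bpow_length]
      omega
    have hkey : 4*n + 2 ≤ 2*a + 2*b := by
      by_contra hcon
      push_neg at hcon
      have h1 : a + b ≤ 2*n := by omega
      have h2 := ab1 a b n ha0 hb0 h1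
      nlinarith
    omega
  · -- z = n^2 + n + k
    have hn0 : (0:ℤ) ≤ (n:ℤ) := Int.natCast_nonneg n
    have hkn' : (k:ℤ) ≤ (n:ℤ) := by exact_mod_cast hkn
    have hk1' : (1:ℤ) ≤ (k:ℤ) := by exact_mod_cast hk1
    have hφS : φ (evalX Sz) = ⟨(n:ℤ)+1, (n:ℤ)+1, z⟩ := by
      rw [hS, evalX_append, evalX_append, evalX_append, evalX_apow, evalX_bpow, evalX_apow,
        evalX_bpow, map_mul, map_mul, map_mul, φ_Ha_zpow, φ_Hb_zpow, φ_Ha_zpow, φ_Hb_zpow]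
      ext <;> simp [hzn] <;> ring
    rw [hrep, φ_hElt] at hφS
    have hx' : x' = (n:ℤ)+1 := (congrArg H3.x hφS)
    have hy' : y' = (n:ℤ)+1 := (congrArg H3.y hφS)
    have hxn : x ≤ n := by nlinarith
    have hlen : ((bpow (y - y') ++ Sz ++ apow (x - x')).length : ℤ) = (4*n+4) - x - y := by
      rw [hS]
      simp only [List.length_append, apow_length, bpow_length]
      omega
    have hkey : 4*n + 4 ≤ 2*a + 2*b := by
      by_contra hcon
      push_neg at hcon
      have h1 : a + b ≤ 2*n+1 := by omega
      have h2 := ab2 a b n ha0 hb0 h1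
      nlinarith
    omega
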